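/- Let H be a Hopf algebra over a field k. The map from R(H^e) to H⊗H sending x⊗y to x_2 ⊗ S²(x_1)·y is an isomorphism of (H^e)-H-bimodules, where R(H^e) is H^e viewed as a right H-module via (x⊗y)←a = x a_2 ⊗ S(a_1) y (and left H^e-module by (a⊗b)→(x⊗y) = ax⊗yb), and the target H⊗H is a free right H-module via right multiplication on the first factor, with left H^e-action (a⊗b)→(x⊗y) = a_2 x ⊗ S²(a_1) y b. Its inverse sends x⊗y to x_2 ⊗ S(x_1)·y. -/

import Mathlib

/- STATEMENT 1: The map R(H^e) → H⊗H, x⊗y ↦ x_2 ⊗ S²(x_1)·y, is an isomorphism of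
(H^e)-H-bimodules, with inverse x⊗y ↦ x_2 ⊗ S(x_1)·y. -/

open TensorProduct

set_option maxHeartbeats 1000000
set_option synthInstance.maxHeartbeats 400000

noncomputable section

namespace Stmt1

variable {k : Type} [Field k] {H : Type} [Ring H] [HopfAlgebra k H]

variable (k H) in
def S : H →ₗ[k] H := HopfAlgebra.antipode k

variable (k H) in
def Δ : H →ₗ[k] H ⊗[k] H := Coalgebra.comul

variable (k H) in
def mm : H ⊗[k] H →ₗ[k] H := LinearMap.mul' k H

variable (k H) in
def α : (H ⊗[k] H) ⊗[k] H ≃ₗ[k] H ⊗[k] (H ⊗[k] H) := TensorProduct.assoc k H H H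

variable (k H) in
def cc : H ⊗[k] H ≃ₗ[k] H ⊗[k] H := TensorProduct.comm k H H

variable (k H) in
def ttc : (H ⊗[k] H) ⊗[k] (H ⊗[k] H) ≃ₗ[k] (H ⊗[k] H) ⊗[k] (H ⊗[k] H) :=
  TensorProduct.tensorTensorTensorComm k H H H H

variable (k H) in
/-- `x ⊗ y ↦ x_2 ⊗ S²(x_1)·y`, the claimed isomorphism. -/
def φ : H ⊗[k] H →ₗ[k] H ⊗[k] H :=
  (TensorProduct.map LinearMap.id (mm k H ∘ₗ TensorProduct.map (S k H ∘ₗ S k H) LinearMap.id)) ∘ₗ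
    (α k H).toLinearMap ∘ₗ TensorProduct.map (cc k H).toLinearMap LinearMap.id ∘ₗ
      TensorProduct.map (Δ k H) LinearMap.id

variable (k H) in
/-- `x ⊗ y ↦ x_2 ⊗ S(x_1)·y`, the claimed inverse. -/
def ψ : H ⊗[k] H →ₗ[k] H ⊗[k] H :=
  (TensorProduct.map LinearMap.id (mm k H ∘ₗ TensorProduct.map (S k H) LinearMap.id)) ∘ₗ
    (α k H).toLinearMap ∘ₗ TensorProduct.map (cc k H).toLinearMap LinearMap.id ∘ₗ
      TensorProduct.map (Δ k H) LinearMap.id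

variable (k H) in
/-- right `H`-action on `R(H^e)`: `(x⊗y) ← a = x a_2 ⊗ S(a_1) y`. -/
def ractSrc : (H ⊗[k] H) ⊗[k] H →ₗ[k] H ⊗[k] H :=
  (TensorProduct.map (mm k H)
      (mm k H ∘ₗ TensorProduct.map (S k H) LinearMap.id ∘ₗ (cc k H).toLinearMap)) ∘ₗ
    (ttc k H).toLinearMap ∘ₗ
      TensorProduct.map LinearMap.id ((cc k H).toLinearMap ∘ₗ Δ k H)

variable (k H) in
/-- right `H`-action on the target: right multiplication on the first factor. -/
def ractTgt : (H ⊗[k] H) ⊗[k] H →ₗ[k] H ⊗[k] H :=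
  (TensorProduct.map (mm k H) LinearMap.id) ∘ₗ (α k H).symm.toLinearMap ∘ₗ
    (TensorProduct.map LinearMap.id (cc k H).toLinearMap) ∘ₗ (α k H).toLinearMap

variable (k H) in
/-- left `H^e`-action on `R(H^e)`: `(a⊗b) → (x⊗y) = a x ⊗ y b`. -/
def lactSrc : (H ⊗[k] H) ⊗[k] (H ⊗[k] H) →ₗ[k] H ⊗[k] H :=
  (TensorProduct.map (mm k H) (mm k H ∘ₗ (cc k H).toLinearMap)) ∘ₗ (ttc k H).toLinearMap

variable (k H) in
/-- left `H^e`-action on the target: `(a⊗b) → (x⊗y) = a_2 x ⊗ S²(a_1) y b`. -/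
def lactTgt : (H ⊗[k] H) ⊗[k] (H ⊗[k] H) →ₗ[k] H ⊗[k] H :=
  (TensorProduct.map (mm k H)
      (mm k H ∘ₗ (cc k H).toLinearMap ∘ₗ
        TensorProduct.map LinearMap.id
          (mm k H ∘ₗ TensorProduct.map (S k H ∘ₗ S k H) LinearMap.id) ∘ₗ
          (TensorProduct.assoc k H H H).toLinearMap ∘ₗ
            TensorProduct.map (cc k H).toLinearMap LinearMap.id)) ∘ₗ
    (TensorProduct.tensorTensorTensorComm k H (H ⊗[k] H) H H).toLinearMap ∘ₗ
      TensorProduct.map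
        ((α k H).toLinearMap ∘ₗ TensorProduct.map (cc k H).toLinearMap LinearMap.id ∘ₗ
          TensorProduct.map (Δ k H) LinearMap.id)
        LinearMap.id




open Coalgebra HopfAlgebra

section Conv
variable {C : Type} [AddCommMonoid C] [Module k C] [Coalgebra k C]
variable {A : Type} [Semiring A] [Algebra k A]

/-- convolution product -/
def conv (f g : C →ₗ[k] A) : C →ₗ[k] A :=
  LinearMap.mul' k A ∘ₗ TensorProduct.map f g ∘ₗ Coalgebra.comul

lemma conv_repr (f g : C →ₗ[k] A) {c : C} {ι : Type} (r : Repr k c ι) :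
    conv f g c = ∑ i ∈ r.index, f (r.left i) * g (r.right i) := by
  simp only [conv, LinearMap.comp_apply, ← r.eq, map_sum, TensorProduct.map_tmul,
    LinearMap.mul'_apply]

/-- convolution unit -/
def convUnit : C →ₗ[k] A := Algebra.linearMap k A ∘ₗ Coalgebra.counit

lemma conv_unit_right (f : C →ₗ[k] A) : conv f convUnit = f := by
  ext c
  have h := congrArg (TensorProduct.rid k A) (sum_map_tmul_counit_eq (R := k) f c
    (repr := ℛ k c))
  simp only [map_sum, TensorProduct.rid_tmul] at h
  rw [conv_repr f _ (ℛ k c)]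
  simp only [convUnit, LinearMap.comp_apply, Algebra.linearMap_apply, Algebra.smul_def] at h ⊢
  simpa [Algebra.commutes] using h

lemma conv_unit_left (f : C →ₗ[k] A) : conv convUnit f = f := by
  ext c
  have h := congrArg (TensorProduct.lid k A) (sum_counit_tmul_map_eq (R := k) f c
    (repr := ℛ k c))
  simp only [map_sum, TensorProduct.lid_tmul] at h
  rw [conv_repr _ f (ℛ k c)]
  simp only [convUnit, LinearMap.comp_apply, Algebra.linearMap_apply, Algebra.smul_def] at h ⊢
  simpa using h

lemma conv_assoc (f g h : C →ₗ[k] A) : conv (conv f g) h = conv f (conv g h) := by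
  ext c
  set r := ℛ k c
  have key := Coalgebra.sum_map_tmul_tmul_eq (R := k) f g h c (repr := r)
    (a₁ := fun i => ℛ k (r.left i)) (a₂ := fun i => ℛ k (r.right i))
  have key2 := congrArg (LinearMap.mul' k A ∘ₗ LinearMap.lTensor A (LinearMap.mul' k A)) key
  simp only [map_sum, LinearMap.comp_apply, LinearMap.lTensor_tmul, LinearMap.mul'_apply] at key2
  rw [conv_repr (conv f g) h r, conv_repr f (conv g h) r]
  calc ∑ i ∈ r.index, conv f g (r.left i) * h (r.right i)
      = ∑ i ∈ r.index, ∑ j ∈ (ℛ k (r.left i)).index,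
          f ((ℛ k (r.left i)).left j) * (g ((ℛ k (r.left i)).right j) * h (r.right i)) := by
        refine Finset.sum_congr rfl fun i _ => ?_
        rw [conv_repr f g (ℛ k (r.left i)), Finset.sum_mul]
        simp [mul_assoc]
    _ = ∑ i ∈ r.index, ∑ j ∈ (ℛ k (r.right i)).index,
          f (r.left i) * (g ((ℛ k (r.right i)).left j) * h ((ℛ k (r.right i)).right j)) :=
        key2.symm
    _ = ∑ i ∈ r.index, f (r.left i) * conv g h (r.right i) := by
        refine Finset.sum_congr rfl fun i _ => ?_
        rw [conv_repr g h (ℛ k (r.right i)), Finset.mul_sum]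

end Conv

section Anti
variable {H : Type} [Ring H] [HopfAlgebra k H]

/-- A representation of `comul (a * b)` from representations of `comul a` and `comul b`. -/
def mulRepr {a b : H} {ι κ : Type} (ra : Repr k a ι) (rb : Repr k b κ) : Repr k (a * b) (ι × κ) where
  index := ra.index ×ˢ rb.index
  left := fun p => ra.left p.1 * rb.left p.2
  right := fun p => ra.right p.1 * rb.right p.2
  eq := by
    rw [Bialgebra.comul_mul, ← ra.eq, ← rb.eq, Finset.sum_mul_sum]
    rw [Finset.sum_product]
    simp [Algebra.TensorProduct.tmul_mul_tmul]

/-- A representation of `comul (a ⊗ₜ b)` in `H ⊗ H`. -/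
def tmulRepr {a b : H} {ι κ : Type} (ra : Repr k a ι) (rb : Repr k b κ) :
    Repr k (a ⊗ₜ[k] b : H ⊗[k] H) (ι × κ) where
  index := ra.index ×ˢ rb.index
  left := fun p => ra.left p.1 ⊗ₜ[k] rb.left p.2
  right := fun p => ra.right p.1 ⊗ₜ[k] rb.right p.2
  eq := by
    have : Coalgebra.comul (R := k) (a ⊗ₜ[k] b) =
        (Algebra.TensorProduct.tensorTensorTensorComm k k k k H H H H)
          (Coalgebra.comul a ⊗ₜ[k] Coalgebra.comul b) := by
      rw [Bialgebra.TensorProduct.comul_eq_algHom_toLinearMap]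
      rfl
    rw [this, ← ra.eq, ← rb.eq]
    rw [TensorProduct.sum_tmul]
    simp only [TensorProduct.tmul_sum, map_sum]
    rw [Finset.sum_product]
    rfl

lemma counit_tmul (a b : H) :
    Coalgebra.counit (R := k) (a ⊗ₜ[k] b : H ⊗[k] H) =
      Coalgebra.counit (R := k) a * Coalgebra.counit (R := k) b := by
  rw [Bialgebra.TensorProduct.counit_eq_algHom_toLinearMap]
  simp [mul_comm]

lemma antipode_one : antipode (R := k) (1 : H) = 1 := by
  have := mul_antipode_rTensor_comul_apply (R := k) (1 : H)
  simpa [Bialgebra.comul_one, Algebra.TensorProduct.one_def] using this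

lemma antipode_algebraMap (c : k) :
    antipode (R := k) (algebraMap k H c) = algebraMap k H c := by
  rw [Algebra.algebraMap_eq_smul_one, map_smul, antipode_one]

lemma antipode_mul_linear :
    (antipode (R := k) (A := H)) ∘ₗ LinearMap.mul' k H =
      LinearMap.mul' k H ∘ₗ TensorProduct.map (antipode k) (antipode k) ∘ₗ
        (TensorProduct.comm k H H).toLinearMap := by
  have h1 : conv ((antipode (R := k) (A := H)) ∘ₗ LinearMap.mul' k H) (LinearMap.mul' k H)
      = convUnit := by
    apply TensorProduct.ext'
    intro a b
    rw [conv_repr _ _ (tmulRepr (ℛ k a) (ℛ k b))]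
    have := sum_antipode_mul_eq_algebraMap_counit (R := k) (mulRepr (ℛ k a) (ℛ k b))
    simp only [mulRepr, Finset.sum_product] at this
    simp only [tmulRepr, Finset.sum_product, LinearMap.comp_apply, LinearMap.mul'_apply,
      LinearMapClass.map_smul]
    rw [this]
    simp [convUnit, counit_tmul, Bialgebra.counit_mul]
    exact Algebra.commutes _ _
  have h2 : conv (LinearMap.mul' k H)
      (LinearMap.mul' k H ∘ₗ TensorProduct.map (antipode k) (antipode k) ∘ₗ
        (TensorProduct.comm k H H).toLinearMap) = convUnit := by
    apply TensorProduct.ext'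
    intro a b
    rw [conv_repr _ _ (tmulRepr (ℛ k a) (ℛ k b))]
    simp only [tmulRepr, Finset.sum_product, LinearMap.comp_apply, LinearEquiv.coe_coe,
      TensorProduct.comm_tmul, TensorProduct.map_tmul, LinearMap.mul'_apply]
    have hb := sum_mul_antipode_eq_algebraMap_counit (R := k) (ℛ k b)
    have ha := sum_mul_antipode_eq_algebraMap_counit (R := k) (ℛ k a)
    calc ∑ i ∈ (ℛ k a).index, ∑ j ∈ (ℛ k b).index,
          (ℛ k a).left i * (ℛ k b).left j *
            (antipode (R := k) ((ℛ k b).right j) * antipode (R := k) ((ℛ k a).right i))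
        = ∑ i ∈ (ℛ k a).index, (ℛ k a).left i *
            ((∑ j ∈ (ℛ k b).index, (ℛ k b).left j * antipode (R := k) ((ℛ k b).right j)) *
              antipode (R := k) ((ℛ k a).right i)) := by
          refine Finset.sum_congr rfl fun i _ => ?_
          rw [Finset.sum_mul, Finset.mul_sum]
          refine Finset.sum_congr rfl fun j _ => ?_
          noncomm_ring
      _ = ∑ i ∈ (ℛ k a).index, (ℛ k a).left i *
            (algebraMap k H (Coalgebra.counit b) * antipode (R := k) ((ℛ k a).right i)) := by
          rw [hb]
      _ = convUnit (a ⊗ₜ[k] b) := by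
          simp only [Algebra.commutes (Coalgebra.counit (R := k) b), ← mul_assoc,
            ← Finset.sum_mul, ha]
          simp [convUnit, counit_tmul]
          exact Algebra.commutes _ _
  have := congrArg (fun f => conv f (LinearMap.mul' k H ∘ₗ TensorProduct.map (antipode k) (antipode k) ∘ₗ
    (TensorProduct.comm k H H).toLinearMap)) h1
  simp only [conv_assoc, h2, conv_unit_right, conv_unit_left] at this
  exact this

end Anti

section Keys
variable {H : Type} [Ring H] [HopfAlgebra k H]

lemma antipode_mul (a b : H) :
    antipode (R := k) (a * b) = antipode (R := k) b * antipode (R := k) a := by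
  have := congrArg (fun f => f (a ⊗ₜ[k] b)) (antipode_mul_linear (k := k) (H := H))
  simpa using this

/-- The shuffling map `u ⊗ (v ⊗ w) ↦ w ⊗ (g v * f u)`. -/
def shuffle (f g : H →ₗ[k] H) : H ⊗[k] (H ⊗[k] H) →ₗ[k] H ⊗[k] H :=
  TensorProduct.map LinearMap.id
      (LinearMap.mul' k H ∘ₗ (TensorProduct.comm k H H).toLinearMap) ∘ₗ
    (TensorProduct.leftComm k H H H).toLinearMap ∘ₗ
    TensorProduct.map LinearMap.id (TensorProduct.comm k H H).toLinearMap ∘ₗ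
    TensorProduct.map f (TensorProduct.map g LinearMap.id)

@[simp] lemma shuffle_tmul (f g : H →ₗ[k] H) (u v w : H) :
    shuffle f g (u ⊗ₜ[k] (v ⊗ₜ[k] w)) = w ⊗ₜ[k] (g v * f u) := by
  simp [shuffle, TensorProduct.leftComm]

lemma sum_counit_smul_tmul_one (x : H) {ι : Type} (r : Repr k x ι) :
    ∑ i ∈ r.index, Coalgebra.counit (R := k) (r.left i) • (r.right i ⊗ₜ[k] (1 : H)) =
      x ⊗ₜ[k] (1 : H) := by
  have h := congrArg (((TensorProduct.mk k H H).flip 1) ∘ₗ (TensorProduct.lid k H).toLinearMap)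
    (sum_counit_tmul_eq (R := k) r)
  simp only [map_sum, LinearMap.comp_apply, LinearEquiv.coe_coe, TensorProduct.lid_tmul,
    LinearMap.flip_apply, TensorProduct.mk_apply, one_smul] at h
  rw [← h]
  exact Finset.sum_congr rfl fun i _ => (TensorProduct.smul_tmul' _ _ _).symm

/-- `∑ x₃ ⊗ S(x₂) S²(x₁) = x ⊗ 1`. -/
lemma key1 (x : H) {ι κ : Type} (r : Repr k x ι) (r2 : ∀ i : ι, Repr k (r.right i) κ) :
    ∑ i ∈ r.index, ∑ j ∈ (r2 i).index, (r2 i).right j ⊗ₜ[k]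
        (antipode (R := k) ((r2 i).left j) * antipode (R := k) (antipode (R := k) (r.left i)))
      = x ⊗ₜ[k] (1 : H) := by
  have key := Coalgebra.sum_tmul_tmul_eq (R := k) r (fun i => ℛ k (r.left i)) r2
  have key2 := congrArg (shuffle (k := k) (antipode k ∘ₗ antipode k) (antipode k)) key
  simp only [map_sum, shuffle_tmul, LinearMap.comp_apply] at key2
  rw [← key2]
  calc ∑ i ∈ r.index, ∑ j ∈ (ℛ k (r.left i)).index,
        r.right i ⊗ₜ[k] (antipode (R := k) ((ℛ k (r.left i)).right j) *
          antipode (R := k) (antipode (R := k) ((ℛ k (r.left i)).left j)))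
      = ∑ i ∈ r.index, r.right i ⊗ₜ[k]
          (antipode (R := k) (algebraMap k H (Coalgebra.counit (R := k) (r.left i)))) := by
        refine Finset.sum_congr rfl fun i _ => ?_
        rw [← TensorProduct.tmul_sum]
        congr 1
        rw [← sum_antipode_mul_eq_algebraMap_counit (R := k) (ℛ k (r.left i)), map_sum]
        exact Finset.sum_congr rfl fun j _ => (antipode_mul _ _).symm
    _ = x ⊗ₜ[k] (1 : H) := by
        simp only [antipode_algebraMap, Algebra.algebraMap_eq_smul_one, map_smul,
          antipode_one, TensorProduct.tmul_smul]
        exact sum_counit_smul_tmul_one x r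

/-- `∑ x₃ ⊗ S²(x₂) S(x₁) = x ⊗ 1`. -/
lemma key2 (x : H) {ι κ : Type} (r : Repr k x ι) (r2 : ∀ i : ι, Repr k (r.right i) κ) :
    ∑ i ∈ r.index, ∑ j ∈ (r2 i).index, (r2 i).right j ⊗ₜ[k]
        (antipode (R := k) (antipode (R := k) ((r2 i).left j)) * antipode (R := k) (r.left i))
      = x ⊗ₜ[k] (1 : H) := by
  have key := Coalgebra.sum_tmul_tmul_eq (R := k) r (fun i => ℛ k (r.left i)) r2
  have key2 := congrArg (shuffle (k := k) (antipode k) (antipode k ∘ₗ antipode k)) key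
  simp only [map_sum, shuffle_tmul, LinearMap.comp_apply] at key2
  rw [← key2]
  calc ∑ i ∈ r.index, ∑ j ∈ (ℛ k (r.left i)).index,
        r.right i ⊗ₜ[k] (antipode (R := k) (antipode (R := k) ((ℛ k (r.left i)).right j)) *
          antipode (R := k) ((ℛ k (r.left i)).left j))
      = ∑ i ∈ r.index, r.right i ⊗ₜ[k]
          (antipode (R := k) (algebraMap k H (Coalgebra.counit (R := k) (r.left i)))) := by
        refine Finset.sum_congr rfl fun i _ => ?_
        rw [← TensorProduct.tmul_sum]
        congr 1
        rw [← sum_mul_antipode_eq_algebraMap_counit (R := k) (ℛ k (r.left i)), map_sum]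
        exact Finset.sum_congr rfl fun j _ => (antipode_mul _ _).symm
    _ = x ⊗ₜ[k] (1 : H) := by
        simp only [antipode_algebraMap, Algebra.algebraMap_eq_smul_one, map_smul,
          antipode_one, TensorProduct.tmul_smul]
        exact sum_counit_smul_tmul_one x r

end Keys

section Eval

lemma phi_tmul (x y : H) {ι : Type} (r : Coalgebra.Repr k x ι) :
    φ k H (x ⊗ₜ[k] y) = ∑ i ∈ r.index, r.right i ⊗ₜ[k] (S k H (S k H (r.left i)) * y) := by
  simp [φ, Δ, cc, α, mm, ← r.eq, TensorProduct.sum_tmul, TensorProduct.tmul_sum, map_sum]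

lemma psi_tmul (x y : H) {ι : Type} (r : Coalgebra.Repr k x ι) :
    ψ k H (x ⊗ₜ[k] y) = ∑ i ∈ r.index, r.right i ⊗ₜ[k] (S k H (r.left i) * y) := by
  simp [ψ, Δ, cc, α, mm, ← r.eq, TensorProduct.sum_tmul, TensorProduct.tmul_sum, map_sum]

lemma ractSrc_tmul (x y a : H) {ι : Type} (ra : Coalgebra.Repr k a ι) :
    ractSrc k H ((x ⊗ₜ[k] y) ⊗ₜ[k] a) =
      ∑ p ∈ ra.index, (x * ra.right p) ⊗ₜ[k] (S k H (ra.left p) * y) := by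
  simp [ractSrc, Δ, cc, mm, ttc, ← ra.eq, TensorProduct.sum_tmul, TensorProduct.tmul_sum,
    map_sum]

lemma ractTgt_tmul (u v a : H) :
    ractTgt k H ((u ⊗ₜ[k] v) ⊗ₜ[k] a) = (u * a) ⊗ₜ[k] v := by
  simp [ractTgt, cc, mm, α]

lemma lactSrc_tmul (a b x y : H) :
    lactSrc k H ((a ⊗ₜ[k] b) ⊗ₜ[k] (x ⊗ₜ[k] y)) = (a * x) ⊗ₜ[k] (y * b) := by
  simp [lactSrc, cc, mm, ttc]

lemma lactTgt_tmul (a b u v : H) {ι : Type} (ra : Coalgebra.Repr k a ι) :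
    lactTgt k H ((a ⊗ₜ[k] b) ⊗ₜ[k] (u ⊗ₜ[k] v)) =
      ∑ p ∈ ra.index, (ra.right p * u) ⊗ₜ[k] ((S k H (S k H (ra.left p)) * v) * b) := by
  simp only [lactTgt, LinearMap.comp_apply, TensorProduct.map_tmul, Δ, LinearMap.id_coe, id_eq,
    LinearEquiv.coe_coe, cc, mm, α, TensorProduct.comm_tmul, TensorProduct.assoc_tmul]
  rw [← ra.eq]
  simp only [TensorProduct.sum_tmul, map_sum, TensorProduct.map_tmul, LinearEquiv.coe_coe,
    TensorProduct.comm_tmul, TensorProduct.assoc_tmul, TensorProduct.tensorTensorTensorComm_tmul,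
    LinearMap.id_coe, id_eq, LinearMap.mul'_apply]
  simp [LinearMap.comp_apply, TensorProduct.map_tmul]

end Eval


section MainAux
open Coalgebra HopfAlgebra

lemma S_antipode : S k H = HopfAlgebra.antipode k := rfl

lemma SS_mul (u v : H) :
    S k H (S k H (u * v)) = S k H (S k H u) * S k H (S k H v) := by
  simp [S_antipode, antipode_mul]

lemma psi_phi_tmul (x y : H) : ψ k H (φ k H (x ⊗ₜ[k] y)) = x ⊗ₜ[k] y := by
  set r := ℛ k x with hr
  rw [phi_tmul x y r, map_sum]
  rw [Finset.sum_congr rfl (fun i _ => psi_tmul (r.right i) (S k H (S k H (r.left i)) * y)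
    (ℛ k (r.right i)))]
  have hk := congrArg (TensorProduct.map (LinearMap.id : H →ₗ[k] H) (LinearMap.mulRight k y))
    (key1 x r (fun i => ℛ k (r.right i)))
  simp only [map_sum, TensorProduct.map_tmul, LinearMap.mulRight_apply, LinearMap.id_coe,
    id_eq, one_mul, ← S_antipode] at hk
  rw [← hk]
  exact Finset.sum_congr rfl fun i _ => Finset.sum_congr rfl fun j _ => by rw [mul_assoc]

lemma phi_psi_tmul (x y : H) : φ k H (ψ k H (x ⊗ₜ[k] y)) = x ⊗ₜ[k] y := by
  set r := ℛ k x with hr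
  rw [psi_tmul x y r, map_sum]
  rw [Finset.sum_congr rfl (fun i _ => phi_tmul (r.right i) (S k H (r.left i) * y)
    (ℛ k (r.right i)))]
  have hk := congrArg (TensorProduct.map (LinearMap.id : H →ₗ[k] H) (LinearMap.mulRight k y))
    (key2 x r (fun i => ℛ k (r.right i)))
  simp only [map_sum, TensorProduct.map_tmul, LinearMap.mulRight_apply, LinearMap.id_coe,
    id_eq, one_mul, ← S_antipode] at hk
  rw [← hk]
  exact Finset.sum_congr rfl fun i _ => Finset.sum_congr rfl fun j _ => by rw [mul_assoc]

lemma ract_compat (x y a : H) :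
    φ k H (ractSrc k H ((x ⊗ₜ[k] y) ⊗ₜ[k] a)) =
      ractTgt k H (φ k H (x ⊗ₜ[k] y) ⊗ₜ[k] a) := by
  set ra := ℛ k a with hra
  set rx := ℛ k x with hrx
  -- RHS
  rw [phi_tmul x y rx]
  rw [TensorProduct.sum_tmul, map_sum]
  rw [Finset.sum_congr rfl (fun i _ => ractTgt_tmul (rx.right i) (S k H (S k H (rx.left i)) * y) a)]
  -- LHS
  rw [ractSrc_tmul x y a ra, map_sum]
  rw [Finset.sum_congr rfl (fun p _ => phi_tmul (x * ra.right p) (S k H (ra.left p) * y)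
    (mulRepr rx (ℛ k (ra.right p))))]
  simp only [mulRepr, Finset.sum_product]
  have hkey := key2 a ra (fun p => ℛ k (ra.right p))
  rw [Finset.sum_comm]
  refine Finset.sum_congr rfl fun i _ => ?_
  have hi := congrArg (TensorProduct.map (LinearMap.mulLeft k (rx.right i))
    (LinearMap.mulLeft k (S k H (S k H (rx.left i))) ∘ₗ LinearMap.mulRight k y)) hkey
  simp only [map_sum, TensorProduct.map_tmul, LinearMap.mulLeft_apply, LinearMap.mulRight_apply,
    LinearMap.comp_apply, one_mul, ← S_antipode] at hi
  rw [← hi]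
  refine Finset.sum_congr rfl fun p _ => Finset.sum_congr rfl fun q _ => ?_
  rw [SS_mul]
  simp [mul_assoc]

lemma lact_compat (a b x y : H) :
    φ k H (lactSrc k H ((a ⊗ₜ[k] b) ⊗ₜ[k] (x ⊗ₜ[k] y))) =
      lactTgt k H ((a ⊗ₜ[k] b) ⊗ₜ[k] φ k H (x ⊗ₜ[k] y)) := by
  set ra := ℛ k a with hra
  set rx := ℛ k x with hrx
  rw [lactSrc_tmul, phi_tmul (a * x) (y * b) (mulRepr ra rx)]
  rw [phi_tmul x y rx, TensorProduct.tmul_sum, map_sum]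
  rw [Finset.sum_congr rfl (fun i _ => lactTgt_tmul a b (rx.right i) (S k H (S k H (rx.left i)) * y) ra)]
  simp only [mulRepr, Finset.sum_product]
  rw [Finset.sum_comm]
  refine Finset.sum_congr rfl fun i _ => Finset.sum_congr rfl fun p _ => ?_
  rw [SS_mul]
  simp [mul_assoc]

end MainAux

/-- `φ : R(H^e) → H⊗H` is an isomorphism of `H^e`-`H`-bimodules with
inverse `ψ`. -/
theorem stmt1 :
    (ψ k H ∘ₗ φ k H = LinearMap.id ∧ φ k H ∘ₗ ψ k H = LinearMap.id) ∧
    (∀ (m : H ⊗[k] H) (a : H), φ k H (ractSrc k H (m ⊗ₜ a)) = ractTgt k H (φ k H m ⊗ₜ a)) ∧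
    (∀ (c m : H ⊗[k] H), φ k H (lactSrc k H (c ⊗ₜ m)) = lactTgt k H (c ⊗ₜ φ k H m)) := by
  refine ⟨⟨?_, ?_⟩, ?_, ?_⟩
  · apply TensorProduct.ext'
    intro x y
    simpa using psi_phi_tmul x y
  · apply TensorProduct.ext'
    intro x y
    simpa using phi_psi_tmul x y
  · intro m a
    induction m using TensorProduct.induction_on with
    | zero => simp
    | tmul x y => exact ract_compat x y a
    | add u v hu hv => simp only [TensorProduct.add_tmul, map_add, hu, hv]
  · intro c m
    induction c using TensorProduct.induction_on with
    | zero => simp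
    | tmul a b =>
        induction m using TensorProduct.induction_on with
        | zero => simp
        | tmul x y => exact lact_compat a b x y
        | add u v hu hv => simp only [TensorProduct.tmul_add, map_add, hu, hv]
    | add u v hu hv => simp only [TensorProduct.add_tmul, map_add, hu, hv]

end Stmt1

end
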